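/- arXiv:1006.0312 — 2 statements merged into one kernel-verified Lean document; each statement's English description precedes it below -/
import Mathlib

section
/- Let P and Q be probability distributions on a countable product space X×Y×Z such that q(xyz) is close to p(x|y)q(yz) on a large finite set and the YZ-marginals are close in total variation. Precisely: suppose p(xyz) = p(x|y)p(yz) (Markov chain X–Y–Z), S ⊆ X×Y×Z is finite with Σ_{S} p(xyz) ≥ 1 - ε/8, |q(xyz) - p(x|y)q(yz)| ≤ ε/(8|S|) for all (x,y,z) ∈ S, and Σ_{xyz} |p(x|y)q(yz) - p(xyz)| ≤ ε/4. Then the variational distance satisfies Σ_{xyz} |q(xyz) - p(xyz)| ≤ ε. -/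
def IsPMF {α : Type*} (p : α → ℝ) : Prop := (∀ a, 0 ≤ p a) ∧ ∑' a, p a = 1

theorem variational_distance_bound_from_local_closeness
    {X Y Z : Type*} [Countable X] [Countable Y] [Countable Z]
    (p q : X × Y × Z → ℝ) (hp : IsPMF p) (hq : IsPMF q)
    (pXgY : X → Y → ℝ)
    (hmarkov : ∀ x y z, p (x, y, z) = pXgY x y * ∑' x', p (x', y, z))
    (ε : ℝ) (hε : 0 < ε)
    (S : Finset (X × Y × Z))
    (hS : 1 - ε / 8 ≤ ∑ s ∈ S, p s)
    (hclose : ∀ s ∈ S,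
      |q s - pXgY s.1 s.2.1 * ∑' x', q (x', s.2.1, s.2.2)| ≤ ε / (8 * S.card))
    (hsum2 : Summable fun s : X × Y × Z =>
      |pXgY s.1 s.2.1 * (∑' x', q (x', s.2.1, s.2.2)) - p s|)
    (hyz : ∑' s : X × Y × Z,
      |pXgY s.1 s.2.1 * (∑' x', q (x', s.2.1, s.2.2)) - p s| ≤ ε / 4) :
    ∑' s, |q s - p s| ≤ ε := by
  obtain ⟨hp0, hp1⟩ := hp
  obtain ⟨hq0, hq1⟩ := hq
  have hpsum : Summable p := by
    by_contra h; rw [tsum_eq_zero_of_not_summable h] at hp1; norm_num at hp1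
  have hqsum : Summable q := by
    by_contra h; rw [tsum_eq_zero_of_not_summable h] at hq1; norm_num at hq1
  have hle : ∀ s, |q s - p s| ≤ q s + p s := by
    intro s
    have := abs_sub (q s) (p s)
    rwa [abs_of_nonneg (hq0 s), abs_of_nonneg (hp0 s)] at this
  have hf : Summable fun s => |q s - p s| :=
    Summable.of_nonneg_of_le (fun s => abs_nonneg _) hle (hqsum.add hpsum)
  rcases S.eq_empty_or_nonempty with hSe | hSne
  · subst hSe
    simp only [Finset.sum_empty] at hS
    calc ∑' s, |q s - p s| ≤ ∑' s, (q s + p s) :=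
            Summable.tsum_le_tsum hle hf (hqsum.add hpsum)
      _ = 2 := by rw [Summable.tsum_add hqsum hpsum, hp1, hq1]; norm_num
      _ ≤ ε := by linarith
  · have hc : (0 : ℝ) < S.card := by exact_mod_cast Finset.card_pos.mpr hSne
    -- sum over S of |q - r| ≤ ε/8
    have hA : ∑ s ∈ S, |q s - pXgY s.1 s.2.1 * ∑' x', q (x', s.2.1, s.2.2)|
        ≤ ε / 8 := by
      calc ∑ s ∈ S, |q s - pXgY s.1 s.2.1 * ∑' x', q (x', s.2.1, s.2.2)|
          ≤ ∑ _s ∈ S, ε / (8 * S.card) := Finset.sum_le_sum hclose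
        _ = S.card * (ε / (8 * S.card)) := by
            rw [Finset.sum_const, nsmul_eq_mul]
        _ = ε / 8 := by rw [mul_div_assoc', mul_comm (8:ℝ), mul_div_mul_left _ _ hc.ne']
    -- sum over S of |r - p| ≤ ε/4
    have hB : ∑ s ∈ S, |pXgY s.1 s.2.1 * (∑' x', q (x', s.2.1, s.2.2)) - p s|
        ≤ ε / 4 :=
      le_trans (Summable.sum_le_tsum S (fun s _ => abs_nonneg _) hsum2) hyz
    -- sum over S of |q - p| ≤ 3ε/8
    have hC : ∑ s ∈ S, |q s - p s| ≤ 3 * ε / 8 := by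
      have : ∑ s ∈ S, |q s - p s|
          ≤ ∑ s ∈ S, (|q s - pXgY s.1 s.2.1 * ∑' x', q (x', s.2.1, s.2.2)|
              + |pXgY s.1 s.2.1 * (∑' x', q (x', s.2.1, s.2.2)) - p s|) := by
        apply Finset.sum_le_sum
        intro s _
        exact abs_sub_le _ _ _
      rw [Finset.sum_add_distrib] at this
      linarith
    -- sum over S of q ≥ 1 - ε/2
    have hqS : 1 - ε / 2 ≤ ∑ s ∈ S, q s := by
      have h1 : ∑ s ∈ S, p s ≤ ∑ s ∈ S, q s + ∑ s ∈ S, |q s - p s| := by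
        rw [← Finset.sum_add_distrib]
        apply Finset.sum_le_sum
        intro s _
        have := neg_abs_le (q s - p s)
        linarith
      linarith
    -- tails
    have hcq := Summable.sum_add_tsum_compl (s := S) hqsum
    have hcp := Summable.sum_add_tsum_compl (s := S) hpsum
    have hcf := Summable.sum_add_tsum_compl (s := S) hf
    have htail : ∑' s : ↑(↑S : Set (X × Y × Z))ᶜ, |q s - p s|
        ≤ (1 - ∑ s ∈ S, q s) + (1 - ∑ s ∈ S, p s) := by
      have h1 : ∑' s : ↑(↑S : Set (X × Y × Z))ᶜ, |q s - p s|
          ≤ ∑' s : ↑(↑S : Set (X × Y × Z))ᶜ, (q s + p s) :=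
        Summable.tsum_le_tsum (fun s => hle s) (hf.subtype _) ((hqsum.add hpsum).subtype _)
      have h2 : ∑' s : ↑(↑S : Set (X × Y × Z))ᶜ, (q s + p s)
          = (∑' s : ↑(↑S : Set (X × Y × Z))ᶜ, q s)
            + ∑' s : ↑(↑S : Set (X × Y × Z))ᶜ, p s :=
        Summable.tsum_add (hqsum.subtype _) (hpsum.subtype _)
      rw [h2] at h1
      have hq' : ∑' s : ↑(↑S : Set (X × Y × Z))ᶜ, q s = 1 - ∑ s ∈ S, q s := by
        rw [hq1] at hcq; linarith
      have hp' : ∑' s : ↑(↑S : Set (X × Y × Z))ᶜ, p s = 1 - ∑ s ∈ S, p s := by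
        rw [hp1] at hcp; linarith
      rw [hq', hp'] at h1
      exact h1
    have hSp1 : ∑ s ∈ S, p s ≤ 1 := by
      have := Summable.sum_le_tsum S (fun s _ => hp0 s) hpsum
      rwa [hp1] at this
    linarith
end

section
/- Conditional entropy is lower semicontinuous under total variation convergence: if P_{A_m B_m} are joint distributions on a countable product A×B with V(P_{A_m B_m}, P_{AB}) → 0 as m → ∞, and H(P_{A|B}) < ∞, then liminf_{m→∞} H(P_{A_m|B_m}) ≥ H(P_{A|B}). -/
set_option maxHeartbeats 1000000

/-- Conditional Shannon entropy `H(A|B)` in bits, valued in `ℝ≥0∞`. -/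
noncomputable def condHen {A B : Type*} (p : A × B → ℝ) : ENNReal :=
  ∑' ab : A × B, ENNReal.ofReal (-(p ab * Real.logb 2 (p ab / ∑' a, p (a, ab.2))))

open Filter MeasureTheory Real

/-- Fatou's lemma for `tsum` over a countable type. -/
lemma tsum_liminf_le_liminf_tsum {α : Type*} [Countable α] (f : ℕ → α → ENNReal) :
    ∑' a, liminf (fun n => f n a) atTop ≤ liminf (fun n => ∑' a, f n a) atTop := by
  letI : MeasurableSpace α := ⊤
  haveI : MeasurableSingletonClass α := ⟨fun _ => trivial⟩
  calc ∑' a, liminf (fun n => f n a) atTop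
      = ∫⁻ a, liminf (fun n => f n a) atTop ∂Measure.count := (lintegral_count _).symm
    _ ≤ liminf (fun n => ∫⁻ a, f n a ∂Measure.count) atTop :=
        lintegral_liminf_le (fun n => measurable_from_top)
    _ = liminf (fun n => ∑' a, f n a) atTop := by simp_rw [lintegral_count]

lemma summable_of_isPMF {α : Type*} {p : α → ℝ} (hp : IsPMF p) : Summable p := by
  by_contra h
  have := tsum_eq_zero_of_not_summable h
  rw [hp.2] at this
  norm_num at this

theorem condEntropy_lower_semicontinuous
    {A B : Type*} [Countable A] [Countable B]
    (pm : ℕ → A × B → ℝ) (p : A × B → ℝ)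
    (hpm : ∀ m, IsPMF (pm m)) (hp : IsPMF p)
    (hfin : condHen p ≠ ⊤)
    (hV : Filter.Tendsto (fun m => ∑' ab : A × B, |pm m ab - p ab|)
      Filter.atTop (nhds 0)) :
    condHen p ≤ Filter.liminf (fun m => condHen (pm m)) Filter.atTop := by
  classical
  -- summability facts
  have hps : Summable p := summable_of_isPMF hp
  have hpms : ∀ m, Summable (pm m) := fun m => summable_of_isPMF (hpm m)
  have hinj : ∀ b : B, Function.Injective (fun a : A => (a, b)) := by
    intro b a₁ a₂ h
    exact (Prod.ext_iff.1 h).1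
  have hfib : ∀ b, Summable (fun a => p (a, b)) := fun b =>
    hps.comp_injective (hinj b)
  have hfibm : ∀ m b, Summable (fun a => pm m (a, b)) := fun m b =>
    (hpms m).comp_injective (hinj b)
  have hdiffs : ∀ m, Summable (fun ab => |pm m ab - p ab|) := by
    intro m
    refine Summable.of_nonneg_of_le (fun ab => abs_nonneg _) (fun ab => ?_)
      (((hpms m).add hps))
    calc |pm m ab - p ab| ≤ |pm m ab| + |p ab| := abs_sub _ _
      _ = pm m ab + p ab := by
          rw [abs_of_nonneg ((hpm m).1 ab), abs_of_nonneg (hp.1 ab)]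
  -- pointwise convergence
  have hx : ∀ ab, Tendsto (fun m => pm m ab) atTop (nhds (p ab)) := by
    intro ab
    rw [tendsto_iff_dist_tendsto_zero]
    refine squeeze_zero (fun m => dist_nonneg) (fun m => ?_) hV
    rw [Real.dist_eq]
    exact Summable.le_tsum (hdiffs m) ab (fun j _ => abs_nonneg _)
  -- marginal convergence
  have hy : ∀ b, Tendsto (fun m => ∑' a, pm m (a, b)) atTop
      (nhds (∑' a, p (a, b))) := by
    intro b
    rw [tendsto_iff_dist_tendsto_zero]
    refine squeeze_zero (fun m => dist_nonneg) (fun m => ?_) hV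
    rw [Real.dist_eq, ← Summable.tsum_sub (hfibm m b) (hfib b)]
    have hsb : Summable (fun a : A => |pm m (a, b) - p (a, b)|) :=
      (hdiffs m).comp_injective (hinj b)
    have h1 : ‖∑' a : A, (pm m (a, b) - p (a, b))‖ ≤
        ∑' a : A, ‖pm m (a, b) - p (a, b)‖ := by
      refine norm_tsum_le_tsum_norm ?_
      simpa only [Real.norm_eq_abs] using hsb
    simp only [Real.norm_eq_abs] at h1
    refine h1.trans ?_
    exact Summable.tsum_le_tsum_of_inj (fun a => (a, b)) (hinj b)
      (fun c _ => abs_nonneg _) (fun a => le_rfl) hsb (hdiffs m)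
  -- basic bounds
  have hle : ∀ (q : A × B → ℝ), IsPMF q → Summable q → ∀ ab : A × B,
      q ab ≤ ∑' a, q (a, ab.2) := by
    intro q hq hqs ab
    have := Summable.le_tsum (hqs.comp_injective (hinj ab.2)) ab.1
      (fun j _ => hq.1 _)
    simpa using this
  have hmarg_le_one : ∀ (q : A × B → ℝ), IsPMF q → Summable q → ∀ b : B,
      ∑' a, q (a, b) ≤ 1 := by
    intro q hq hqs b
    rw [← hq.2]
    exact Summable.tsum_le_tsum_of_inj (fun a => (a, b)) (hinj b)
      (fun c _ => hq.1 _) (fun a => le_rfl) (hqs.comp_injective (hinj b)) hqs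
  -- the general entropy-term bound: for 0 ≤ x ≤ y ≤ 1,
  -- -(x * logb 2 (x / y)) ≤ negMulLog x / log 2
  have hbound : ∀ x y : ℝ, 0 ≤ x → x ≤ y → y ≤ 1 →
      -(x * Real.logb 2 (x / y)) ≤ Real.negMulLog x / Real.log 2 := by
    intro x y hx0 hxy hy1
    rcases eq_or_lt_of_le hx0 with h0 | h0
    · simp [← h0, Real.negMulLog]
    · have hy0 : 0 < y := lt_of_lt_of_le h0 hxy
      have hlog2 : 0 < Real.log 2 := Real.log_pos (by norm_num)
      have hlogy : Real.log y ≤ 0 := Real.log_nonpos (le_of_lt hy0) hy1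
      rw [Real.logb, Real.log_div (ne_of_gt h0) (ne_of_gt hy0), Real.negMulLog]
      have h1 : x * (Real.log y - Real.log x) ≤ -x * Real.log x := by
        nlinarith [mul_nonneg (le_of_lt h0) (neg_nonneg.2 hlogy)]
      calc -(x * ((Real.log x - Real.log y) / Real.log 2))
          = (x * (Real.log y - Real.log x)) / Real.log 2 := by ring
        _ ≤ (-x * Real.log x) / Real.log 2 := by
            exact div_le_div_of_nonneg_right h1 hlog2.le |>.trans_eq rfl
  -- define the terms
  set F : (A × B → ℝ) → A × B → ENNReal := fun q ab =>
    ENNReal.ofReal (-(q ab * Real.logb 2 (q ab / ∑' a, q (a, ab.2)))) with hF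
  -- term-wise convergence
  have hterm : ∀ ab, Tendsto (fun m => F (pm m) ab) atTop (nhds (F p ab)) := by
    intro ab
    rcases eq_or_lt_of_le (hp.1 ab) with h0 | h0
    · -- p ab = 0 : squeeze to 0
      have hFp : F p ab = 0 := by
        simp [hF, ← h0]
      rw [hFp]
      have hg : Tendsto (fun m => ENNReal.ofReal (Real.negMulLog (pm m ab) / Real.log 2))
          atTop (nhds 0) := by
        have : Tendsto (fun m => Real.negMulLog (pm m ab) / Real.log 2) atTop
            (nhds (Real.negMulLog (p ab) / Real.log 2)) :=
          ((Real.continuous_negMulLog.tendsto _).comp (hx ab)).div_const _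
        rw [← h0] at this
        simpa [Function.comp_def] using (ENNReal.continuous_ofReal.tendsto _).comp this
      refine tendsto_of_tendsto_of_tendsto_of_le_of_le tendsto_const_nhds hg
        (fun m => zero_le) (fun m => ?_)
      exact ENNReal.ofReal_le_ofReal (hbound _ _ ((hpm m).1 ab)
        (hle (pm m) (hpm m) (hpms m) ab) (hmarg_le_one (pm m) (hpm m) (hpms m) ab.2))
    · -- p ab > 0 : plain continuity
      have hQ : 0 < ∑' a, p (a, ab.2) := lt_of_lt_of_le h0 (hle p hp hps ab)
      have hdiv : Tendsto (fun m => pm m ab / ∑' a, pm m (a, ab.2)) atTop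
          (nhds (p ab / ∑' a, p (a, ab.2))) :=
        (hx ab).div (hy ab.2) (ne_of_gt hQ)
      have hlogb : Tendsto (fun m => Real.logb 2 (pm m ab / ∑' a, pm m (a, ab.2)))
          atTop (nhds (Real.logb 2 (p ab / ∑' a, p (a, ab.2)))) :=
        (Real.continuousAt_logb (ne_of_gt (div_pos h0 hQ))).tendsto.comp hdiv
      exact (ENNReal.continuous_ofReal.tendsto _).comp (((hx ab).mul hlogb).neg)
  -- put it together via Fatou
  have : condHen p = ∑' ab : A × B, liminf (fun m => F (pm m) ab) atTop := by
    unfold condHen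
    exact tsum_congr fun ab => ((hterm ab).liminf_eq).symm
  rw [this]
  exact tsum_liminf_le_liminf_tsum _
end
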